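/- Equivalence of APCG iterates (strongly convex case): suppose sequences x^{(k)}, y^{(k)}, z^{(k)} follow the recursions y^{(k)} = (x^{(k)} + α z^{(k)})/(1+α), z^{(k+1)} = (1-α)z^{(k)} + α y^{(k)} + U_{i_k} h^{(k)}, x^{(k+1)} = y^{(k)} + nα(z^{(k+1)} - z^{(k)}) + nα²(z^{(k)} - y^{(k)}), with x^{(0)} = z^{(0)}. Define ρ = (1-α)/(1+α), u^{(0)} = 0, v^{(0)} = x^{(0)}, and recursively u^{(k+1)} = u^{(k)} - ((1-nα)/(2ρ^{k+1})) U_{i_k} h^{(k)}, v^{(k+1)} = v^{(k)} + ((1+nα)/2) U_{i_k} h^{(k)}. Then for all k: x^{(k)} = ρ^k u^{(k)} + v^{(k)}, y^{(k)} = ρ^{k+1} u^{(k)} + v^{(k)}, z^{(k)} = -ρ^k u^{(k)} + v^{(k)}. -/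

import Mathlib

/-- Equivalence of the APCG iterates with the efficient (u,v) implementation. -/
theorem stmt_13 (V : Type*) [AddCommGroup V] [Module ℝ V]
    (n : ℕ) (hn : 1 ≤ n) (α : ℝ) (hα0 : 0 < α) (hα1 : α ≤ 1 / n)
    (ρ : ℝ) (hρ : ρ = (1 - α) / (1 + α))
    (x y z u v w : ℕ → V)
    (hx0 : x 0 = z 0) (hu0 : u 0 = 0) (hv0 : v 0 = x 0)
    (hy : ∀ k, y k = (1 / (1 + α)) • (x k + α • z k))
    (hz : ∀ k, z (k + 1) = (1 - α) • z k + α • y k + w k)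
    (hx : ∀ k, x (k + 1) = y k + ((n : ℝ) * α) • (z (k + 1) - z k)
      + ((n : ℝ) * α ^ 2) • (z k - y k))
    (hu : ∀ k, u (k + 1) = u k - ((1 - (n : ℝ) * α) / (2 * ρ ^ (k + 1))) • w k)
    (hv : ∀ k, v (k + 1) = v k + ((1 + (n : ℝ) * α) / 2) • w k) :
    ∀ k, x k = ρ ^ k • u k + v k ∧
      y k = ρ ^ (k + 1) • u k + v k ∧
      z k = -(ρ ^ k) • u k + v k := by
  have h1α : (1 : ℝ) + α ≠ 0 := by positivity
  have hρα : ρ * (1 + α) = 1 - α := by rw [hρ]; field_simp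
  have hkey : ∀ k : ℕ, ρ ^ (k + 1) * ((1 - (n : ℝ) * α) / (2 * ρ ^ (k + 1)))
      = (1 - (n : ℝ) * α) / 2 := by
    intro k
    by_cases hρ0 : ρ = 0
    · have hα1' : α = 1 := by
        have : (1 : ℝ) - α = 0 := by
          have := hρα
          rw [hρ0] at this
          linarith
        linarith
      have hn1 : n = 1 := by
        have hnpos : (0 : ℝ) < n := by exact_mod_cast hn
        have : (n : ℝ) ≤ 1 := by
          rw [hα1', le_div_iff₀ hnpos] at hα1
          linarith
        have : n ≤ 1 := by exact_mod_cast this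
        omega
      rw [hρ0, hn1, hα1']
      norm_num
    · have h : ρ ^ (k + 1) ≠ 0 := pow_ne_zero _ hρ0
      field_simp
  have hu' : ∀ k : ℕ, ρ ^ (k + 1) • u (k + 1)
      = ρ ^ (k + 1) • u k - ((1 - (n : ℝ) * α) / 2) • w k := by
    intro k
    rw [hu k, smul_sub, smul_smul, hkey k]
  intro k
  induction k with
  | zero =>
    have hy0 : y 0 = x 0 := by
      rw [hy 0, hx0, show z 0 + α • z 0 = (1 + α) • z 0 by module, smul_smul,
        one_div, inv_mul_cancel₀ h1α, one_smul]
    refine ⟨by simp [hu0, hv0], by simp [hu0, hv0, hy0], by simp [hu0, hv0, hx0]⟩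
  | succ k ih =>
    obtain ⟨hxk, hyk, hzk⟩ := ih
    have hz1 : z (k + 1) = -(ρ ^ (k + 1)) • u (k + 1) + v (k + 1) := by
      rw [hz k, hyk, hzk, hv k, show (-(ρ^(k+1)) : ℝ) • u (k+1) = -(ρ^(k+1) • u (k+1)) from neg_smul _ _, hu']
      match_scalars
      · linear_combination (ρ ^ k) * hρα
      · ring
      · ring
    have hx1 : x (k + 1) = ρ ^ (k + 1) • u (k + 1) + v (k + 1) := by
      rw [hx k, hz1, hyk, hzk, hv k,
        show (-(ρ^(k+1)) : ℝ) • u (k+1) = -(ρ^(k+1) • u (k+1)) from neg_smul _ _, hu']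
      match_scalars
      · linear_combination (-(n : ℝ) * α * ρ ^ k) * hρα
      · ring
      · ring
    refine ⟨hx1, ?_, hz1⟩
    rw [hy (k + 1), hx1, hz1]
    match_scalars
    · field_simp
      linear_combination (-(ρ ^ (k + 1))) * hρα
    · field_simp
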